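/- Let n ≥ 2. In the tensor space ℂ^{n×n×2} endowed with the Euclidean topology, the set { T ∈ ℂ^{n×n×2} : rank(T) ≤ n } is not closed and its closure coincides with the whole space ℂ^{n×n×2}. -/

import Mathlib

open Matrix Finset

/-- The tensor rank of an array `A ∈ 𝔽^{l×m×n}`: the minimal `r` such that `A` is a sum of
`r` elementary (decomposable) tensors `x ⊗ y ⊗ z = (x_i y_j z_k)`. -/
noncomputable def tensorRank {𝔽 : Type*} [Field 𝔽] {l m n : ℕ}
    (A : Fin l → Fin m → Fin n → 𝔽) : ℕ :=
  sInf {r : ℕ | ∃ (x : Fin r → Fin l → 𝔽) (y : Fin r → Fin m → 𝔽) (z : Fin r → Fin n → 𝔽),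
      A = ∑ i : Fin r, fun p q s => x i p * y i q * z i s}

/-- The multilinear matrix multiplication: `(L,M,N)·A` has entries
`b_{pqr} = Σ_{i,j,k} L_{pi} M_{qj} N_{rk} a_{ijk}`. -/
def mulAct {𝔽 : Type*} [Field 𝔽] {l m n : ℕ}
    (L : Matrix (Fin l) (Fin l) 𝔽) (M : Matrix (Fin m) (Fin m) 𝔽) (N : Matrix (Fin n) (Fin n) 𝔽)
    (A : Fin l → Fin m → Fin n → 𝔽) : Fin l → Fin m → Fin n → 𝔽 :=
  fun p q r => ∑ i, ∑ j, ∑ k, L p i * M q j * N r k * A i j k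

/-- The elementary (decomposable) tensor `x ⊗ y ⊗ z = (x_i y_j z_k)`. -/
def elemT {𝔽 : Type*} [Field 𝔽] {l m n : ℕ}
    (x : Fin l → 𝔽) (y : Fin m → 𝔽) (z : Fin n → 𝔽) : Fin l → Fin m → Fin n → 𝔽 :=
  fun i j k => x i * y j * z k

/-- Let `n ≥ 2`. In the tensor space `ℂ^{n×n×2}` with the Euclidean topology, the set of
tensors of tensor rank at most `n` is not closed, and its closure is the whole space. -/

lemma tensorRank_le {l m n r : ℕ} (A : Fin l → Fin m → Fin n → ℂ)
    (x : Fin r → Fin l → ℂ) (y : Fin r → Fin m → ℂ) (z : Fin r → Fin n → ℂ)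
    (h : A = ∑ i : Fin r, fun p q s => x i p * y i q * z i s) : tensorRank A ≤ r :=
  Nat.sInf_le ⟨x, y, z, h⟩

lemma full_decomp {l m k : ℕ} (A : Fin l → Fin m → Fin k → ℂ) :
    ∃ (x : Fin (l*m) → Fin l → ℂ) (y : Fin (l*m) → Fin m → ℂ) (z : Fin (l*m) → Fin k → ℂ),
      A = ∑ i : Fin (l*m), fun p q s => x i p * y i q * z i s := by
  let e : Fin l × Fin m ≃ Fin (l * m) := finProdFinEquiv
  refine ⟨fun t p => if p = (e.symm t).1 then 1 else 0,
          fun t q => if q = (e.symm t).2 then 1 else 0,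
          fun t s => A (e.symm t).1 (e.symm t).2 s, ?_⟩
  funext p q s
  rw [Finset.sum_apply, Finset.sum_apply, Finset.sum_apply]
  rw [← Equiv.sum_comp e (fun t => _)]
  simp only [Equiv.symm_apply_apply]
  rw [Fintype.sum_prod_type]
  simp [Finset.sum_ite_eq, Finset.sum_ite_eq']

lemma exists_decomp_of_le {l m k N : ℕ} (A : Fin l → Fin m → Fin k → ℂ)
    (h : tensorRank A ≤ N) :
    ∃ (x : Fin N → Fin l → ℂ) (y : Fin N → Fin m → ℂ) (z : Fin N → Fin k → ℂ),
      A = ∑ i : Fin N, fun p q s => x i p * y i q * z i s := by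
  have hne : {r : ℕ | ∃ (x : Fin r → Fin l → ℂ) (y : Fin r → Fin m → ℂ) (z : Fin r → Fin k → ℂ),
      A = ∑ i : Fin r, fun p q s => x i p * y i q * z i s}.Nonempty := by
    obtain ⟨x, y, z, hxyz⟩ := full_decomp A
    exact ⟨l*m, x, y, z, hxyz⟩
  have hmem := Nat.sInf_mem hne
  obtain ⟨x, y, z, hxyz⟩ := hmem
  set r := tensorRank A with hr
  -- pad
  refine ⟨fun i => if h : (i : ℕ) < r then x ⟨i, h⟩ else 0,
          fun i => if h : (i : ℕ) < r then y ⟨i, h⟩ else 0,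
          fun i => if h : (i : ℕ) < r then z ⟨i, h⟩ else 0, ?_⟩
  have key : ∀ i : Fin N, (fun p q s => (if h : (i : ℕ) < r then x ⟨i, h⟩ else 0) p *
      (if h : (i : ℕ) < r then y ⟨i, h⟩ else 0) q *
      (if h : (i : ℕ) < r then z ⟨i, h⟩ else 0) s) =
      (fun j : ℕ => if h : j < r then
        (fun p q s => x ⟨j, h⟩ p * y ⟨j, h⟩ q * z ⟨j, h⟩ s) else 0) (i : ℕ) := by
    intro i
    by_cases h : (i : ℕ) < r
    · simp [h]
    · funext p q s; simp [h]
  calc A = ∑ i : Fin r, fun p q s => x i p * y i q * z i s := hxyz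
    _ = ∑ j ∈ Finset.range r, (fun j : ℕ => if h : j < r then
        (fun p q s => x ⟨j, h⟩ p * y ⟨j, h⟩ q * z ⟨j, h⟩ s) else 0) j := by
        rw [← Fin.sum_univ_eq_sum_range]
        refine Finset.sum_congr rfl fun i _ => ?_
        simp; rfl
    _ = ∑ j ∈ Finset.range N, (fun j : ℕ => if h : j < r then
        (fun p q s => x ⟨j, h⟩ p * y ⟨j, h⟩ q * z ⟨j, h⟩ s) else 0) j := by
        refine Finset.sum_subset (Finset.range_subset_range.2 h) fun j _ hj => ?_
        have : ¬ j < r := by simpa using hj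
        simp [this]
    _ = _ := by
        rw [← Fin.sum_univ_eq_sum_range]
        exact Finset.sum_congr rfl fun i _ => (key i).symm

def shiftM (n : ℕ) : Matrix (Fin n) (Fin n) ℂ :=
  Matrix.of fun p q => if (p : ℕ) + 1 = (q : ℕ) then 1 else 0

lemma shiftM_pow (n k : ℕ) :
    (shiftM n) ^ k = Matrix.of fun (p q : Fin n) => if (p : ℕ) + k = (q : ℕ) then 1 else 0 := by
  induction k with
  | zero =>
    ext p q
    simp [Matrix.one_apply, Fin.ext_iff]
  | succ k ih =>
    rw [pow_succ, ih]
    ext p q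
    rw [Matrix.mul_apply]
    by_cases h : (p : ℕ) + k < n
    · rw [Finset.sum_eq_single (⟨(p : ℕ) + k, h⟩ : Fin n)]
      · simp only [Matrix.of_apply, shiftM, show (p : ℕ) + (k+1) = (p:ℕ) + k + 1 from rfl]
        by_cases hq : (p : ℕ) + k + 1 = (q : ℕ) <;> simp [hq]
      · intro b _ hb
        have : ¬ ((p : ℕ) + k = (b : ℕ)) := fun hc => hb (by ext; simp [← hc])
        simp [this]
      · simp
    · have hq : ¬ ((p : ℕ) + (k+1) = (q : ℕ)) := by omega
      rw [Finset.sum_eq_zero, Matrix.of_apply, if_neg hq]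
      intro b _
      have : ¬ ((p : ℕ) + k = (b : ℕ)) := by omega
      simp [this]

lemma shiftM_pow_n (n : ℕ) : (shiftM n) ^ n = 0 := by
  rw [shiftM_pow]
  ext p q
  have : ¬ ((p : ℕ) + n = (q : ℕ)) := by omega
  simp [this]

lemma conjM_pow {n : ℕ} (X Δ : Matrix (Fin n) (Fin n) ℂ) (hX : IsUnit X.det) (k : ℕ) :
    (X * Δ * X⁻¹) ^ k = X * Δ ^ k * X⁻¹ := by
  induction k with
  | zero => simp [Matrix.mul_nonsing_inv X hX]
  | succ k ih =>
    rw [pow_succ, ih, pow_succ]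
    calc X * Δ ^ k * X⁻¹ * (X * Δ * X⁻¹)
        = X * Δ ^ k * (X⁻¹ * X) * Δ * X⁻¹ := by
          simp only [Matrix.mul_assoc]
      _ = X * (Δ ^ k * Δ) * X⁻¹ := by
          rw [Matrix.nonsing_inv_mul X hX]
          simp only [Matrix.mul_assoc, Matrix.mul_one, Matrix.one_mul]
      _ = _ := by simp only [Matrix.mul_assoc]

/-- The tensor with slices `(shiftM n, 1)`. -/
def T0 (n : ℕ) : Fin n → Fin n → Fin 2 → ℂ :=
  fun p q k => if k = 0 then shiftM n p q else (1 : Matrix (Fin n) (Fin n) ℂ) p q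

lemma T0_rank_gt {n : ℕ} (hn : 2 ≤ n) : ¬ tensorRank (T0 n) ≤ n := by
  intro h
  obtain ⟨x, y, z, hd⟩ := exists_decomp_of_le (T0 n) h
  set X : Matrix (Fin n) (Fin n) ℂ := Matrix.of fun p i => x i p with hX
  set Y : Matrix (Fin n) (Fin n) ℂ := Matrix.of fun i q => y i q with hY
  set c : Fin n → ℂ := fun i => z i 1 with hc
  set d : Fin n → ℂ := fun i => z i 0 with hdd
  have hslice : ∀ (k : Fin 2) (p q : Fin n), T0 n p q k = ∑ i, x i p * y i q * z i k := by
    intro k p q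
    have := congrFun (congrFun (congrFun hd p) q) k
    rw [this, Finset.sum_apply, Finset.sum_apply, Finset.sum_apply]
  have h1 : (1 : Matrix (Fin n) (Fin n) ℂ) = X * Matrix.diagonal c * Y := by
    ext p q
    have := hslice 1 p q
    simp only [T0, if_neg (by decide : (1 : Fin 2) ≠ 0)] at this
    rw [this, Matrix.mul_apply]
    refine Finset.sum_congr rfl fun i _ => ?_
    rw [Matrix.mul_diagonal]
    simp only [hX, hY, Matrix.of_apply]
    ring
  have hJ : shiftM n = X * Matrix.diagonal d * Y := by
    ext p q
    have := hslice 0 p q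
    simp only [T0, ite_true, eq_self_iff_true] at this
    rw [this, Matrix.mul_apply]
    refine Finset.sum_congr rfl fun i _ => ?_
    rw [Matrix.mul_diagonal]
    simp only [hX, hY, Matrix.of_apply]
    ring
  have hdet : X.det * (Matrix.diagonal c).det * Y.det = 1 := by
    rw [← Matrix.det_mul, ← Matrix.det_mul, ← h1, Matrix.det_one]
  have hXdet : IsUnit X.det := by
    refine isUnit_iff_ne_zero.mpr fun h0 => ?_
    rw [h0, zero_mul, zero_mul] at hdet; exact zero_ne_one hdet
  have hcdet : (Matrix.diagonal c).det ≠ 0 := by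
    intro h0; rw [h0, mul_zero, zero_mul] at hdet; exact zero_ne_one hdet
  have hci : ∀ i, c i ≠ 0 := by
    rw [Matrix.det_diagonal] at hcdet
    exact fun i => Finset.prod_ne_zero_iff.mp hcdet i (Finset.mem_univ i)
  have hXinv : X⁻¹ = Matrix.diagonal c * Y :=
    Matrix.inv_eq_right_inv (by rw [← Matrix.mul_assoc, ← h1])
  set E : Matrix (Fin n) (Fin n) ℂ := Matrix.diagonal (fun i => (c i)⁻¹) with hE
  have hEc : E * Matrix.diagonal c = 1 := by
    rw [hE, Matrix.diagonal_mul_diagonal]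
    have : (fun i => (c i)⁻¹ * c i) = fun _ => (1 : ℂ) := funext fun i => inv_mul_cancel₀ (hci i)
    rw [this, Matrix.diagonal_one]
  have hYX : Y = E * X⁻¹ := by
    rw [hXinv, ← Matrix.mul_assoc, hEc, Matrix.one_mul]
  set Δ : Matrix (Fin n) (Fin n) ℂ := Matrix.diagonal (fun i => d i * (c i)⁻¹) with hΔ
  have hJconj : shiftM n = X * Δ * X⁻¹ := by
    have hdE : Matrix.diagonal d * E = Δ := by
      rw [hE, hΔ, Matrix.diagonal_mul_diagonal]
    rw [hJ, hYX, ← Matrix.mul_assoc, Matrix.mul_assoc X, hdE]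
  have hΔn : Δ ^ n = 0 := by
    have := shiftM_pow_n n
    rw [hJconj, conjM_pow X Δ hXdet] at this
    calc Δ ^ n = (X⁻¹ * X) * Δ ^ n * (X⁻¹ * X) := by
          rw [Matrix.nonsing_inv_mul X hXdet, Matrix.one_mul, Matrix.mul_one]
      _ = X⁻¹ * (X * Δ ^ n * X⁻¹) * X := by simp only [Matrix.mul_assoc]
      _ = 0 := by rw [this, Matrix.mul_zero, Matrix.zero_mul]
  have hΔ0 : Δ = 0 := by
    rw [hΔ, Matrix.diagonal_pow] at hΔn
    rw [hΔ]
    have : ∀ i, (d i * (c i)⁻¹) ^ n = 0 := by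
      intro i
      have := congrFun (congrFun hΔn i) i
      simpa [Matrix.diagonal_apply_eq] using this
    have h0 : ∀ i, d i * (c i)⁻¹ = 0 := fun i =>
      pow_eq_zero_iff (by omega : n ≠ 0) |>.mp (this i)
    simp only [funext h0]
    exact Matrix.diagonal_zero
  have hJ0 : shiftM n = 0 := by
    rw [hJconj, hΔ0, Matrix.mul_zero, Matrix.zero_mul]
  have : shiftM n (⟨0, by omega⟩ : Fin n) (⟨1, by omega⟩ : Fin n) = 1 := by
    simp [shiftM]
  rw [hJ0] at this
  simp at this

/-- Matrices conjugate (by an invertible matrix) to a diagonal matrix. -/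
def diagSet (ι : Type) [Fintype ι] [DecidableEq ι] : Set (Matrix ι ι ℂ) :=
  {A | ∃ (V : Matrix ι ι ℂ) (D : ι → ℂ), IsUnit V.det ∧ A = V * Matrix.diagonal D * V⁻¹}

lemma conj_mem_diagSet {ι : Type} [Fintype ι] [DecidableEq ι]
    {P A : Matrix ι ι ℂ} (hP : IsUnit P.det) (hA : A ∈ diagSet ι) :
    P * A * P⁻¹ ∈ diagSet ι := by
  obtain ⟨V, D, hV, rfl⟩ := hA
  refine ⟨P * V, D, by rw [Matrix.det_mul]; exact hP.mul hV, ?_⟩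
  rw [Matrix.mul_inv_rev]
  simp only [Matrix.mul_assoc]

lemma conj_mem_closure_diagSet {ι : Type} [Fintype ι] [DecidableEq ι]
    {P A : Matrix ι ι ℂ} (hP : IsUnit P.det) (hA : A ∈ closure (diagSet ι)) :
    P * A * P⁻¹ ∈ closure (diagSet ι) := by
  have hcont : Continuous fun X : Matrix ι ι ℂ => P * X * P⁻¹ :=
    (continuous_const.matrix_mul continuous_id).matrix_mul continuous_const
  have h1 := image_closure_subset_closure_image (s := diagSet ι) hcont
  have h2 : (fun X : Matrix ι ι ℂ => P * X * P⁻¹) '' diagSet ι ⊆ diagSet ι := by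
    rintro _ ⟨B, hB, rfl⟩; exact conj_mem_diagSet hP hB
  exact closure_mono h2 (h1 ⟨A, hA, rfl⟩)

lemma reindex_mem_diagSet {ι κ : Type} [Fintype ι] [DecidableEq ι] [Fintype κ] [DecidableEq κ]
    (e : ι ≃ κ) {A : Matrix ι ι ℂ} (hA : A ∈ diagSet ι) :
    Matrix.reindex e e A ∈ diagSet κ := by
  obtain ⟨V, D, hV, rfl⟩ := hA
  have hmul : ∀ (M N : Matrix ι ι ℂ),
      Matrix.reindex e e (M * N) = Matrix.reindex e e M * Matrix.reindex e e N := by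
    intro M N
    ext i j
    simp [Matrix.mul_apply, Matrix.reindex_apply, Matrix.submatrix_apply]
    rw [← Equiv.sum_comp e.symm (fun k => M (e.symm i) k * N k (e.symm j))]
  have hinv : Matrix.reindex e e V⁻¹ = (Matrix.reindex e e V)⁻¹ := by
    refine (Matrix.inv_eq_left_inv ?_).symm
    rw [← hmul, Matrix.nonsing_inv_mul V hV, Matrix.reindex_apply,
      Matrix.submatrix_one_equiv]
  have hdiag : Matrix.reindex e e (Matrix.diagonal D) = Matrix.diagonal (D ∘ e.symm) := by
    ext i j
    by_cases h : i = j
    · subst h; simp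
    · have : e.symm i ≠ e.symm j := fun hc => h (by simpa using congrArg e hc)
      simp [Matrix.diagonal_apply_ne _ this, Matrix.diagonal_apply_ne _ h]
  refine ⟨Matrix.reindex e e V, D ∘ e.symm, by rwa [Matrix.det_reindex_self], ?_⟩
  rw [hmul, hmul, hinv, hdiag]

lemma reindex_mem_closure_diagSet {ι κ : Type} [Fintype ι] [DecidableEq ι] [Fintype κ]
    [DecidableEq κ] (e : ι ≃ κ) {A : Matrix ι ι ℂ} (hA : A ∈ closure (diagSet ι)) :
    Matrix.reindex e e A ∈ closure (diagSet κ) := by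
  have hcont : Continuous fun X : Matrix ι ι ℂ => Matrix.reindex e e X :=
    continuous_id.matrix_reindex e e
  have h1 := image_closure_subset_closure_image (s := diagSet ι) hcont
  have h2 : (fun X : Matrix ι ι ℂ => Matrix.reindex e e X) '' diagSet ι ⊆ diagSet κ := by
    rintro _ ⟨B, hB, rfl⟩; exact reindex_mem_diagSet e hB
  exact closure_mono h2 (h1 ⟨A, hA, rfl⟩)

lemma exists_eigen {ι : Type} [Fintype ι] [DecidableEq ι] [Nonempty ι] (M : Matrix ι ι ℂ) :
    ∃ (μ : ℂ) (v : ι → ℂ), v ≠ 0 ∧ M.mulVec v = μ • v := by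
  obtain ⟨μ, hμ⟩ := Module.End.exists_eigenvalue (Matrix.mulVecLin M)
  obtain ⟨v, hv⟩ := hμ.exists_hasEigenvector
  exact ⟨μ, v, hv.right, hv.apply_eq_smul⟩

lemma dense_diagSet (N : ℕ) : ∀ (ι : Type) (_I : Fintype ι) (_D : DecidableEq ι),
    Fintype.card ι = N → ∀ M : Matrix ι ι ℂ, M ∈ closure (diagSet ι) := by
  induction N with
  | zero =>
    intro ι I D hcard M
    letI := I; letI := D
    have hempty : IsEmpty ι := Fintype.card_eq_zero_iff.mp hcard
    refine subset_closure ⟨1, 0, by simp, ?_⟩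
    ext j; exact isEmptyElim j
  | succ n IH =>
    intro ι I D hcard M
    letI := I; letI := D
    have hne : Nonempty ι := Fintype.card_pos_iff.mp (by omega)
    obtain ⟨μ, v, hv0, hMv⟩ := exists_eigen M
    obtain ⟨i, hi⟩ : ∃ i, v i ≠ 0 := by
      by_contra hc; push_neg at hc; exact hv0 (funext fun j => hc j)
    set V₀ : Matrix ι ι ℂ := Matrix.updateCol 1 i v with hV₀def
    have hdet : V₀.det = v i := by
      rw [hV₀def, ← Matrix.cramer_apply, Matrix.cramer_one]; rfl
    have hV₀ : IsUnit V₀.det := isUnit_iff_ne_zero.mpr (hdet ▸ hi)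
    set Nm : Matrix ι ι ℂ := V₀⁻¹ * M * V₀ with hNm
    have hMeq : M = V₀ * Nm * V₀⁻¹ := by
      rw [hNm, ← Matrix.mul_assoc, ← Matrix.mul_assoc, Matrix.mul_nonsing_inv _ hV₀,
        Matrix.one_mul, Matrix.mul_assoc, Matrix.mul_nonsing_inv _ hV₀, Matrix.mul_one]
    have hcol : ∀ j, Nm j i = if j = i then μ else 0 := by
      have h1 : V₀ *ᵥ Pi.single i 1 = v := by
        rw [Matrix.mulVec_single]
        funext j; rw [hV₀def]
        simp [Matrix.updateCol_apply]
      have h2 : Nm *ᵥ Pi.single i 1 = μ • (Pi.single i 1 : ι → ℂ) := by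
        have hv1 : V₀⁻¹ *ᵥ v = Pi.single i 1 := by
          rw [← h1, Matrix.mulVec_mulVec, Matrix.nonsing_inv_mul _ hV₀, Matrix.one_mulVec]
        calc Nm *ᵥ Pi.single i 1 = (V₀⁻¹ * M) *ᵥ (V₀ *ᵥ Pi.single i 1) := by
              rw [Matrix.mulVec_mulVec, hNm]
          _ = V₀⁻¹ *ᵥ (M *ᵥ v) := by rw [h1, ← Matrix.mulVec_mulVec]
          _ = μ • (V₀⁻¹ *ᵥ v) := by rw [hMv, Matrix.mulVec_smul]
          _ = μ • (Pi.single i 1 : ι → ℂ) := by rw [hv1]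
      intro j
      have := congrFun h2 j
      rw [Matrix.mulVec_single] at this
      simpa [Pi.single_apply, mul_ite] using this
    let s := {j : ι // j = i}
    let κ := {j : ι // ¬ j = i}
    let e : s ⊕ κ ≃ ι := Equiv.sumCompl (fun j => j = i)
    have hcard' : Fintype.card κ = n := by
      show Fintype.card {j : ι // ¬ j = i} = n
      rw [Fintype.card_subtype_compl, Fintype.card_subtype_eq, hcard]
      omega
    set w : Matrix s κ ℂ := Matrix.of fun a b => Nm a.1 b.1 with hw
    set M₁ : Matrix κ κ ℂ := Matrix.of fun a b => Nm a.1 b.1 with hM₁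
    have hblock : Matrix.reindex e.symm e.symm Nm
        = Matrix.fromBlocks (Matrix.diagonal fun _ : s => μ) w 0 M₁ := by
      ext x y
      cases x with
      | inl a =>
        cases y with
        | inl b =>
          have hab : a = b := Subtype.ext (a.2.trans b.2.symm)
          subst hab
          simp only [Matrix.reindex_apply, Matrix.submatrix_apply, Equiv.symm_symm,
            Matrix.fromBlocks_apply₁₁, Matrix.diagonal_apply_eq]
          show Nm (e (Sum.inl a)) (e (Sum.inl a)) = μ
          have : e (Sum.inl a) = i := a.2
          rw [this, hcol i, if_pos rfl]
        | inr b =>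
          simp only [Matrix.reindex_apply, Matrix.submatrix_apply, Equiv.symm_symm,
            Matrix.fromBlocks_apply₁₂]
          rfl
      | inr a =>
        cases y with
        | inl b =>
          simp only [Matrix.reindex_apply, Matrix.submatrix_apply, Equiv.symm_symm,
            Matrix.fromBlocks_apply₂₁, Matrix.zero_apply]
          show Nm (e (Sum.inr a)) (e (Sum.inl b)) = 0
          have hb : e (Sum.inl b) = i := b.2
          have ha : e (Sum.inr a) = a.1 := rfl
          rw [hb, ha, hcol a.1, if_neg a.2]
        | inr b =>
          simp only [Matrix.reindex_apply, Matrix.submatrix_apply, Equiv.symm_symm,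
            Matrix.fromBlocks_apply₂₂]
          rfl
    have hmem : Matrix.reindex e.symm e.symm Nm ∈ closure (diagSet (s ⊕ κ)) := by
      rw [hblock, mem_closure_iff_nhds]
      intro U hU
      set Φ : Matrix κ κ ℂ × ℂ → Matrix (s ⊕ κ) (s ⊕ κ) ℂ :=
        fun p => Matrix.fromBlocks (Matrix.diagonal fun _ : s => p.2) w 0 p.1 with hΦ
      have hΦc : Continuous Φ := by
        apply Continuous.matrix_fromBlocks
        · exact Continuous.matrix_diagonal (continuous_pi fun _ => continuous_snd)
        · exact continuous_const
        · exact continuous_const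
        · exact continuous_fst
      have hΦval : Φ (M₁, μ) = Matrix.fromBlocks (Matrix.diagonal fun _ : s => μ) w 0 M₁ := rfl
      have hpre : Φ ⁻¹' U ∈ nhds (M₁, μ) :=
        hΦc.continuousAt.preimage_mem_nhds (by rw [hΦval]; exact hU)
      rw [mem_nhds_prod_iff] at hpre
      obtain ⟨U₁, hU₁, U₂, hU₂, hsub⟩ := hpre
      obtain ⟨B, hBU₁, hBdiag⟩ := mem_closure_iff_nhds.mp
        (IH κ inferInstance inferInstance hcard' M₁) U₁ hU₁
      obtain ⟨V₁, D₁, hV₁, rfl⟩ := hBdiag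
      have hfin : (Set.range D₁).Finite := Set.finite_range D₁
      have hdense : Dense (Set.range D₁)ᶜ := hfin.countable.dense_compl ℂ
      obtain ⟨μ', hμ'U₂, hμ'no⟩ := mem_closure_iff_nhds.mp (hdense μ) U₂ hU₂
      have hD : ∀ b, D₁ b - μ' ≠ 0 := by
        intro b hc
        exact hμ'no ⟨b, sub_eq_zero.mp hc⟩
      set y : Matrix s κ ℂ := w * V₁ * Matrix.diagonal (fun b => (D₁ b - μ')⁻¹) with hy
      set W : Matrix (s ⊕ κ) (s ⊕ κ) ℂ := Matrix.fromBlocks 1 y 0 V₁ with hW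
      have hWdet : IsUnit W.det := by
        rw [hW, Matrix.det_fromBlocks_zero₂₁, Matrix.det_one, one_mul]; exact hV₁
      have hBV : (V₁ * Matrix.diagonal D₁ * V₁⁻¹) * V₁ = V₁ * Matrix.diagonal D₁ := by
        rw [Matrix.mul_assoc, Matrix.nonsing_inv_mul _ hV₁, Matrix.mul_one]
      have hyeq : Matrix.diagonal (fun _ : s => μ') * y + w * V₁ = y * Matrix.diagonal D₁ := by
        ext a b
        have hyab : y a b = (w * V₁) a b * (D₁ b - μ')⁻¹ := by
          rw [hy, Matrix.mul_diagonal]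
        rw [Matrix.add_apply, Matrix.diagonal_mul, Matrix.mul_diagonal, hyab]
        have key : ∀ (u t : ℂ), t - μ' ≠ 0 → μ' * (u * (t - μ')⁻¹) + u = u * (t - μ')⁻¹ * t := by
          intro u t ht
          field_simp
          ring
        exact key _ _ (hD b)
      set X₀ := Φ (V₁ * Matrix.diagonal D₁ * V₁⁻¹, μ') with hX₀
      have hmain : X₀ * W
          = W * Matrix.diagonal (Sum.elim (fun _ : s => μ') D₁) := by
        rw [hX₀]
        rw [← Matrix.fromBlocks_diagonal, hW]
        show Matrix.fromBlocks (Matrix.diagonal fun _ : s => μ') w 0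
            (V₁ * Matrix.diagonal D₁ * V₁⁻¹) * Matrix.fromBlocks 1 y 0 V₁ = _
        rw [Matrix.fromBlocks_multiply, Matrix.fromBlocks_multiply]
        rw [hBV, hyeq]
        congr 1 <;> simp
      have hXdiag : X₀
          = W * Matrix.diagonal (Sum.elim (fun _ : s => μ') D₁) * W⁻¹ := by
        rw [← hmain, Matrix.mul_assoc, Matrix.mul_nonsing_inv _ hWdet, Matrix.mul_one]
      refine ⟨X₀, ?_, W, _, hWdet, hXdiag⟩
      exact hsub (Set.mem_prod.mpr ⟨hBU₁, hμ'U₂⟩)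
    have h2 : Nm ∈ closure (diagSet ι) := by
      have := reindex_mem_closure_diagSet e hmem
      rwa [show Matrix.reindex e e (Matrix.reindex e.symm e.symm Nm) = Nm from by
        ext a b; simp] at this
    rw [hMeq]
    exact conj_mem_closure_diagSet hV₀ h2

open Polynomial in
lemma mem_closure_isUnit {n : ℕ} (B : Matrix (Fin n) (Fin n) ℂ) :
    B ∈ closure {A : Matrix (Fin n) (Fin n) ℂ | IsUnit A.det} := by
  rw [mem_closure_iff_nhds]
  intro U hU
  have hf : Continuous fun ε : ℂ => B + ε • (1 : Matrix (Fin n) (Fin n) ℂ) :=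
    continuous_const.add (continuous_id.smul continuous_const)
  have hpre : (fun ε : ℂ => B + ε • (1 : Matrix (Fin n) (Fin n) ℂ)) ⁻¹' U ∈ nhds 0 := by
    refine hf.continuousAt.preimage_mem_nhds ?_
    simpa using hU
  set p : ℂ[X] := Matrix.charpoly (-B) with hp
  have hpne : p ≠ 0 := (Matrix.charpoly_monic (-B)).ne_zero
  have hroots : {ε : ℂ | p.IsRoot ε}.Finite := p.finite_setOf_isRoot hpne
  have hdense : Dense {ε : ℂ | p.IsRoot ε}ᶜ := hroots.countable.dense_compl ℂ
  obtain ⟨ε, hεU, hεroot⟩ := mem_closure_iff_nhds.mp (hdense 0) _ hpre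
  refine ⟨B + ε • 1, hεU, ?_⟩
  have heval : p.eval ε = (B + ε • (1 : Matrix (Fin n) (Fin n) ℂ)).det := by
    rw [hp, Matrix.charpoly, ← Polynomial.coe_evalRingHom, RingHom.map_det]
    congr 1
    ext i j
    by_cases h : i = j
    · subst h
      simp [Matrix.charmatrix_apply_eq, Matrix.one_apply]
      ring
    · simp [Matrix.charmatrix_apply_ne _ _ _ h, Matrix.one_apply_ne h,
        Matrix.diagonal_apply_ne _ h]
  refine isUnit_iff_ne_zero.mpr fun h0 => hεroot ?_
  show p.IsRoot ε
  rw [Polynomial.IsRoot, heval, h0]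

theorem rank_le_n_set_not_closed_and_dense
    {n : ℕ} (hn : 2 ≤ n) :
    ¬ IsClosed {T : Fin n → Fin n → Fin 2 → ℂ | tensorRank T ≤ n} ∧
    closure {T : Fin n → Fin n → Fin 2 → ℂ | tensorRank T ≤ n} = Set.univ := by
  have hdense : closure {T : Fin n → Fin n → Fin 2 → ℂ | tensorRank T ≤ n} = Set.univ := by
    rw [Set.eq_univ_iff_forall]
    intro T
    rw [mem_closure_iff_nhds]
    intro U hU
    set A : Matrix (Fin n) (Fin n) ℂ := Matrix.of fun p q => T p q 0 with hA
    set Bm : Matrix (Fin n) (Fin n) ℂ := Matrix.of fun p q => T p q 1 with hBm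
    set Ψ : Matrix (Fin n) (Fin n) ℂ × Matrix (Fin n) (Fin n) ℂ → (Fin n → Fin n → Fin 2 → ℂ) :=
      fun P => fun p q k => if k = 0 then P.1 p q else P.2 p q with hΨ
    have hΨc : Continuous Ψ := by
      apply continuous_pi; intro p; apply continuous_pi; intro q; apply continuous_pi; intro k
      by_cases h : k = 0
      · simp only [hΨ, h, ite_true]
        exact continuous_fst.matrix_elem p q
      · simp only [hΨ, h, ite_false]
        exact continuous_snd.matrix_elem p q
    have hΨT : Ψ (A, Bm) = T := by
      funext p q k
      fin_cases k
      · simp [hΨ, hA]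
      · simp [hΨ, hBm]
    have hpre : Ψ ⁻¹' U ∈ nhds (A, Bm) := hΨc.continuousAt.preimage_mem_nhds (by rwa [hΨT])
    rw [mem_nhds_prod_iff] at hpre
    obtain ⟨U₁, hU₁, U₂, hU₂, hsub⟩ := hpre
    obtain ⟨B', hB'U₂, hB'det⟩ := mem_closure_iff_nhds.mp (mem_closure_isUnit Bm) U₂ hU₂
    have hρ : Continuous fun Mx : Matrix (Fin n) (Fin n) ℂ => Mx * B' :=
      continuous_id.matrix_mul continuous_const
    have hpre₁ : (fun Mx : Matrix (Fin n) (Fin n) ℂ => Mx * B') ⁻¹' U₁ ∈ nhds (A * B'⁻¹) := by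
      refine hρ.continuousAt.preimage_mem_nhds ?_
      have hA' : (A * B'⁻¹) * B' = A := by
        rw [Matrix.mul_assoc, Matrix.nonsing_inv_mul _ hB'det, Matrix.mul_one]
      rw [hA']
      exact hU₁
    obtain ⟨Md, hMdU₁, hMdDiag⟩ := mem_closure_iff_nhds.mp
      (dense_diagSet n (Fin n) inferInstance inferInstance (Fintype.card_fin n) (A * B'⁻¹))
      _ hpre₁
    obtain ⟨V, Dd, hV, rfl⟩ := hMdDiag
    refine ⟨Ψ (V * Matrix.diagonal Dd * V⁻¹ * B', B'), ?_, ?_⟩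
    · exact hsub (Set.mem_prod.mpr ⟨hMdU₁, hB'U₂⟩)
    · show tensorRank _ ≤ n
      apply tensorRank_le _ (fun i p => V p i) (fun i q => (V⁻¹ * B') i q)
        (fun i k => if k = 0 then Dd i else 1)
      funext p q k
      rw [Finset.sum_apply, Finset.sum_apply, Finset.sum_apply]
      by_cases h : k = 0
      · simp only [hΨ, h, ite_true]
        have hassoc : V * Matrix.diagonal Dd * V⁻¹ * B'
            = V * Matrix.diagonal Dd * (V⁻¹ * B') := by rw [Matrix.mul_assoc]
        rw [hassoc, Matrix.mul_apply]
        refine Finset.sum_congr rfl fun i _ => ?_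
        rw [Matrix.mul_diagonal]
        ring
      · simp only [hΨ, h, ite_false]
        have hVB : V * (V⁻¹ * B') = B' := by
          rw [← Matrix.mul_assoc, Matrix.mul_nonsing_inv _ hV, Matrix.one_mul]
        conv_lhs => rw [← hVB]
        rw [Matrix.mul_apply]
        refine Finset.sum_congr rfl fun i _ => ?_
        ring
  refine ⟨?_, hdense⟩
  intro hclosed
  have huniv : {T : Fin n → Fin n → Fin 2 → ℂ | tensorRank T ≤ n} = Set.univ := by
    rw [← hclosed.closure_eq, hdense]
  exact T0_rank_gt hn (Set.eq_univ_iff_forall.mp huniv (T0 n))
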